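/- If L is a selfdual Lagrangian on X × X* and Λ : X → X* is a bounded skew-adjoint linear operator (⟨Λx, y⟩ = −⟨Λy, x⟩), then M(x,p) := L(x, −Λx + p) is a selfdual Lagrangian, and ∂̄M(x) = Λx + ∂̄L(x). -/

import Mathlib

open NormedSpace

/-- Legendre transform of a Lagrangian in both variables. -/
noncomputable def LagConj {X : Type*} [NormedAddCommGroup X] [NormedSpace ℝ X]
    (L : X × StrongDual ℝ X → EReal) (p : StrongDual ℝ X) (u : X) : EReal :=
  ⨆ yq : X × StrongDual ℝ X, (((p yq.1) + (yq.2 u) : ℝ) : EReal) - L yq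

/-- Shear equivalence `(y, q) ↦ (y, Λy + q)`. -/
noncomputable def skewEquiv {X : Type*} [NormedAddCommGroup X] [NormedSpace ℝ X]
    (Lam : X →L[ℝ] StrongDual ℝ X) : (X × StrongDual ℝ X) ≃ (X × StrongDual ℝ X) where
  toFun yq := (yq.1, Lam yq.1 + yq.2)
  invFun yq := (yq.1, -Lam yq.1 + yq.2)
  left_inv yq := by simp
  right_inv yq := by simp

/-- If `L` is selfdual and `Λ : X → X*` is a bounded skew-adjoint
linear operator, then `M(x,p) = L(x, −Λx + p)` is selfdual and
`∂̄M(x) = Λx + ∂̄L(x)`. -/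
theorem stmt15 {X : Type*} [NormedAddCommGroup X] [NormedSpace ℝ X] [CompleteSpace X]
    (hrefl : Function.Surjective (NormedSpace.inclusionInDoubleDual ℝ X))
    (L : X × StrongDual ℝ X → EReal)
    (hself : ∀ x p, LagConj L p x = L (x, p))
    (Lam : X →L[ℝ] StrongDual ℝ X)
    (hskew : ∀ x y : X, Lam x y = - Lam y x)
    (M : X × StrongDual ℝ X → EReal)
    (hM : ∀ x p, M (x, p) = L (x, -Lam x + p)) :
    (∀ x p, LagConj M p x = M (x, p)) ∧
    (∀ x : X, ∀ p : StrongDual ℝ X,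
      (M (x, p) = ((p x : ℝ) : EReal) ↔
        ∃ q : StrongDual ℝ X, L (x, q) = ((q x : ℝ) : EReal) ∧ p = Lam x + q)) := by
  have hMzero : ∀ x : X, Lam x x = 0 := by
    intro x
    have := hskew x x
    linarith
  constructor
  · intro x p
    have key : LagConj M p x = LagConj L (-Lam x + p) x := by
      unfold LagConj
      rw [← Equiv.iSup_comp (g := fun yq : X × StrongDual ℝ X =>
        (((p yq.1) + (yq.2 x) : ℝ) : EReal) - M yq) (skewEquiv Lam)]
      apply iSup_congr
      intro yq
      simp only [skewEquiv, Equiv.coe_fn_mk]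
      rw [hM yq.1 (Lam yq.1 + yq.2)]
      have h1 : -Lam yq.1 + (Lam yq.1 + yq.2) = yq.2 := by abel
      rw [h1]
      congr 2
      have h2 : (Lam yq.1) x = - (Lam x) yq.1 := hskew yq.1 x
      simp only [ContinuousLinearMap.add_apply, ContinuousLinearMap.neg_apply, h2]
      ring
    rw [key, hself, hM]
  · intro x p
    rw [hM]
    constructor
    · intro h
      refine ⟨-Lam x + p, ?_, by abel⟩
      rw [h]
      congr 1
      simp [hMzero]
    · rintro ⟨q, hq, rfl⟩
      have h1 : -Lam x + (Lam x + q) = q := by abel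
      rw [h1, hq]
      congr 1
      simp [hMzero]
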